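/- Let S be a commutative Noetherian ring, I and I_q ideals with I_q ⊆ I, and suppose the row ideal K = I_q : I is a prime ideal that does not contain I. Then I_q : I = I_q : I^∞, i.e., the row ideal equals the morphism fiber ideal. -/

import Mathlib

theorem rowIdeal_eq_saturation_of_prime {S : Type*} [CommRing S] [IsNoetherianRing S]
    (I Iq : Ideal S) (h : Iq ≤ I)
    (hprime : (Iq.colon I).IsPrime) (hnc : ¬ I ≤ Iq.colon I) :
    Iq.colon I = ⨆ j : ℕ, Iq.colon ((I ^ (j + 1) : Ideal S) : Set S) := by
  obtain ⟨a, haI, haP⟩ := SetLike.not_le_iff_exists.mp hnc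
  apply le_antisymm
  · have := le_iSup (fun j : ℕ => Iq.colon ((I ^ (j + 1) : Ideal S) : Set S)) 0
    simpa using this
  · apply iSup_le
    intro j
    induction j with
    | zero => simp
    | succ n ih =>
      intro x hx
      have hxa : x * a ∈ Iq.colon ((I ^ (n + 1) : Ideal S) : Set S) := by
        rw [Submodule.mem_colon] at hx ⊢
        intro p hp
        have : a * p ∈ I ^ (n + 1 + 1) := by
          rw [pow_succ']
          exact Ideal.mul_mem_mul haI hp
        have := hx _ this
        simpa [smul_eq_mul, mul_assoc] using this
      have hxa' : x * a ∈ Iq.colon I := ih hxa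
      rcases hprime.mem_or_mem hxa' with hx' | ha'
      · exact hx'
      · exact absurd ha' haP
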